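/- Let Z and B be real random variables defined on a common probability space. Suppose Z and B are independent and Z has the standard normal distribution N(0,1). Then for every u ∈ [0,1], P( 1 − |Φ(Z + B) − Φ(−Z)| ≤ u ) = u; that is, the FAB p-value computed with the random, data-derived parameter B remains uniformly distributed under the null hypothesis. -/

import Mathlib

open MeasureTheory ProbabilityTheory

/-- Φ, the standard normal cumulative distribution function. -/
noncomputable def Phi : ℝ → ℝ := fun x => ProbabilityTheory.cdf (gaussianReal 0 1) x

lemma Phi_eq (x : ℝ) : Phi x = ∫ t in Set.Iic x, gaussianPDFReal 0 1 t := by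
  rw [Phi, cdf_eq_real, measureReal_def, gaussianReal_apply_eq_integral 0 one_ne_zero,
    ENNReal.toReal_ofReal (setIntegral_nonneg measurableSet_Iic
      fun t _ => gaussianPDFReal_nonneg _ _ t)]

lemma Phi_sub (x y : ℝ) (h : x ≤ y) :
    Phi y - Phi x = ∫ t in x..y, gaussianPDFReal 0 1 t := by
  rw [Phi_eq, Phi_eq, intervalIntegral.integral_Iic_sub_Iic
    ((integrable_gaussianPDFReal 0 1).integrableOn)
    ((integrable_gaussianPDFReal 0 1).integrableOn)]

lemma Phi_strictMono : StrictMono Phi := by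
  intro x y hxy
  have h : Phi y - Phi x = ∫ t in x..y, gaussianPDFReal 0 1 t := Phi_sub x y hxy.le
  have hpos : 0 < ∫ t in x..y, gaussianPDFReal 0 1 t :=
    intervalIntegral.intervalIntegral_pos_of_pos
      ((integrable_gaussianPDFReal 0 1).intervalIntegrable)
      (fun t => gaussianPDFReal_pos 0 1 t one_ne_zero) hxy
  linarith

lemma Phi_continuous : Continuous Phi := by
  have h : Continuous fun x => ∫ t in (0:ℝ)..x, gaussianPDFReal 0 1 t :=
    (integrable_gaussianPDFReal 0 1).continuous_primitive 0
  have : Phi = fun x => Phi 0 + ∫ t in (0:ℝ)..x, gaussianPDFReal 0 1 t := by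
    funext x
    rcases le_total 0 x with hx | hx
    · have := Phi_sub 0 x hx; linarith
    · have := Phi_sub x 0 hx
      rw [intervalIntegral.integral_symm] at this
      linarith
  rw [this]
  exact continuous_const.add h

lemma gaussian_map_neg : (gaussianReal 0 1).map (fun x => -x) = gaussianReal 0 1 := by
  have h := gaussianReal_map_const_mul (μ := 0) (v := 1) (-1)
  simp only [neg_one_mul, mul_zero, neg_zero] at h
  convert h using 2
  ext : 1
  simp

lemma measure_Iic (x : ℝ) : gaussianReal 0 1 (Set.Iic x) = ENNReal.ofReal (Phi x) :=
  (ofReal_cdf _ x).symm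

lemma gaussian_singleton (x : ℝ) : gaussianReal 0 1 {x} = 0 :=
  gaussianReal_absolutelyContinuous 0 one_ne_zero (by simp)

lemma measure_Ici (x : ℝ) : gaussianReal 0 1 (Set.Ici x) = ENNReal.ofReal (1 - Phi x) := by
  have h1 : (Set.Ici x) = (Set.Iio x)ᶜ := by simp
  rw [h1, measure_compl measurableSet_Iio (measure_ne_top _ _)]
  have h2 : gaussianReal 0 1 (Set.Iio x) = gaussianReal 0 1 (Set.Iic x) := by
    rw [← Set.Iio_union_right (a := x)] at *
    rw [measure_union (by simp) (measurableSet_singleton x), gaussian_singleton, add_zero]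
  rw [h2, measure_Iic, measure_univ, ← ENNReal.ofReal_one]
  rw [← ENNReal.ofReal_sub _ (show (0:ℝ) ≤ Phi x from cdf_nonneg _ x)]

lemma Phi_neg (x : ℝ) : Phi (-x) = 1 - Phi x := by
  have h : gaussianReal 0 1 (Set.Iic (-x)) = gaussianReal 0 1 (Set.Ici x) := by
    conv_lhs => rw [← gaussian_map_neg]
    rw [Measure.map_apply measurable_neg measurableSet_Iic]
    congr 1
    ext z
    simp
  rw [measure_Iic, measure_Ici] at h
  have h2 : Phi x ≤ 1 := cdf_le_one _ x
  exact (ENNReal.ofReal_eq_ofReal_iff (cdf_nonneg _ _) (by linarith)).mp h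

lemma Phi_pos (x : ℝ) : 0 < Phi x := by
  have := Phi_strictMono (show x - 1 < x by linarith)
  have := cdf_nonneg (gaussianReal 0 1) (x - 1)
  have : (0:ℝ) ≤ Phi (x-1) := this
  linarith

lemma Phi_lt_one (x : ℝ) : Phi x < 1 := by
  have := Phi_strictMono (show x < x + 1 by linarith)
  have h2 : Phi (x+1) ≤ 1 := cdf_le_one _ _
  linarith

lemma key (b u : ℝ) (hu0 : 0 ≤ u) (hu1 : u ≤ 1) :
    gaussianReal 0 1 {z | 1 - |Phi (z + b) - Phi (-z)| ≤ u} = ENNReal.ofReal u := by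
  set G : ℝ → ℝ := fun z => Phi (z + b) + Phi z - 1 with hG
  have hset : {z | 1 - |Phi (z + b) - Phi (-z)| ≤ u} = {z | 1 - |G z| ≤ u} := by
    ext z
    simp only [Set.mem_setOf_eq, hG, Phi_neg]
    ring_nf
  rw [hset]
  have hGmono : StrictMono G := fun x y hxy => by
    have h1 := Phi_strictMono (show x + b < y + b by linarith)
    have h2 := Phi_strictMono hxy
    simp only [hG]; linarith
  have hGbound : ∀ z, -1 < G z ∧ G z < 1 := fun z => by
    have := Phi_pos (z + b); have := Phi_pos z
    have := Phi_lt_one (z + b); have := Phi_lt_one z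
    constructor <;> (simp only [hG]; linarith)
  rcases eq_or_lt_of_le hu1 with h1 | h1
  · have : {z | 1 - |G z| ≤ u} = Set.univ := by
      ext z
      simp only [Set.mem_setOf_eq, Set.mem_univ, iff_true, ← h1]
      have := abs_nonneg (G z); linarith
    rw [this, measure_univ, h1, ENNReal.ofReal_one]
  rcases eq_or_lt_of_le hu0 with h0 | h0
  · have : {z | 1 - |G z| ≤ u} = ∅ := by
      ext z
      simp only [Set.mem_setOf_eq, Set.mem_empty_iff_false, iff_false, not_le, ← h0]
      rcases hGbound z with ⟨hl, hr⟩
      have : |G z| < 1 := abs_lt.mpr ⟨hl, hr⟩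
      linarith
    rw [this, measure_empty, ← h0]
    exact ENNReal.ofReal_zero.symm
  -- 0 < u < 1
  set t : ℝ := 1 - u with ht
  have ht0 : 0 < t := by linarith
  have ht1 : t < 1 := by linarith
  -- limits of G
  have hPhiTop : Filter.Tendsto Phi Filter.atTop (nhds 1) := tendsto_cdf_atTop (gaussianReal 0 1)
  have hPhiBot : Filter.Tendsto Phi Filter.atBot (nhds 0) := tendsto_cdf_atBot (gaussianReal 0 1)
  have hGtop : Filter.Tendsto G Filter.atTop (nhds 1) := by
    have h1 : Filter.Tendsto (fun z => Phi (z + b)) Filter.atTop (nhds 1) :=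
      hPhiTop.comp (Filter.tendsto_atTop_add_const_right _ b Filter.tendsto_id)
    have := (h1.add hPhiTop).sub_const 1
    simpa using this
  have hGbot : Filter.Tendsto G Filter.atBot (nhds (-1)) := by
    have h1 : Filter.Tendsto (fun z => Phi (z + b)) Filter.atBot (nhds 0) :=
      hPhiBot.comp (Filter.tendsto_atBot_add_const_right _ b Filter.tendsto_id)
    have := (h1.add hPhiBot).sub_const 1
    simpa using this
  have hGcont : Continuous G :=
    ((Phi_continuous.comp (continuous_id.add continuous_const)).add Phi_continuous).sub
      continuous_const
  -- find a with G a = t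
  obtain ⟨x1, hx1⟩ := (hGtop.eventually (eventually_gt_nhds ht1)).exists
  obtain ⟨x0, hx0⟩ := (hGbot.eventually (eventually_lt_nhds (show (-1:ℝ) < t by linarith))).exists
  have hx01 : x0 ≤ x1 := le_of_lt (hGmono.lt_iff_lt.mp (by linarith))
  obtain ⟨a, _, ha⟩ := intermediate_value_Icc hx01 hGcont.continuousOn
    (Set.mem_Icc.mpr ⟨le_of_lt hx0, le_of_lt hx1⟩)
  -- G (-a - b) = -t
  have hGab : G (-a - b) = -t := by
    have e1 : -a - b + b = -a := by ring
    have e2 : -a - b = -(a + b) := by ring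
    simp only [hG] at ha ⊢
    rw [e1, e2, Phi_neg, Phi_neg]
    linarith
  have hca : -a - b < a := hGmono.lt_iff_lt.mp (by rw [hGab, ha]; linarith)
  have hsets : {z | 1 - |G z| ≤ u} = Set.Ici a ∪ Set.Iic (-a - b) := by
    ext z
    simp only [Set.mem_setOf_eq, Set.mem_union, Set.mem_Ici, Set.mem_Iic]
    constructor
    · intro hz
      have habs : t ≤ |G z| := by linarith
      rcases le_abs.mp habs with h | h
      · exact Or.inl (hGmono.le_iff_le.mp (by rw [ha]; exact h))
      · exact Or.inr (hGmono.le_iff_le.mp (by rw [hGab]; linarith))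
    · intro hz
      rcases hz with h | h
      · have : t ≤ G z := ha ▸ hGmono.le_iff_le.mpr h
        have := le_abs_self (G z); have := abs_nonneg (G z)
        rcases abs_cases (G z) with ⟨he, _⟩ | ⟨he, _⟩ <;> [linarith; linarith]
      · have : G z ≤ -t := hGab ▸ hGmono.le_iff_le.mpr h
        have : t ≤ -(G z) := by linarith
        have := neg_le_abs (G z)
        linarith
  rw [hsets, measure_union _ measurableSet_Iic, measure_Ici, measure_Iic,
    show -a - b = -(a + b) by ring, Phi_neg,
    ← ENNReal.ofReal_add (by have := Phi_lt_one a; linarith)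
      (by have := Phi_lt_one (a + b); linarith)]
  · congr 1
    simp only [hG] at ha
    linarith
  · exact Set.Ici_disjoint_Iic.mpr (by linarith)

theorem stmt_14 {Ω : Type*} [MeasurableSpace Ω] (P : Measure Ω) [IsProbabilityMeasure P]
    (Z B : Ω → ℝ) (hZm : Measurable Z) (hBm : Measurable B)
    (hindep : ProbabilityTheory.IndepFun Z B P)
    (hZ : P.map Z = gaussianReal 0 1) (u : ℝ) (hu : u ∈ Set.Icc (0 : ℝ) 1) :
    P {ω | 1 - |Phi (Z ω + B ω) - Phi (-Z ω)| ≤ u} = ENNReal.ofReal u := by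
  obtain ⟨hu0, hu1⟩ := hu
  set S : Set (ℝ × ℝ) := {p | 1 - |Phi (p.2 + p.1) - Phi (-p.2)| ≤ u} with hSdef
  have hScont : Continuous fun p : ℝ × ℝ => 1 - |Phi (p.2 + p.1) - Phi (-p.2)| := by
    apply continuous_const.sub
    apply Continuous.abs
    exact (Phi_continuous.comp (continuous_snd.add continuous_fst)).sub
      (Phi_continuous.comp continuous_snd.neg)
  have hS : MeasurableSet S :=
    measurableSet_le hScont.measurable measurable_const
  have hpre : {ω | 1 - |Phi (Z ω + B ω) - Phi (-Z ω)| ≤ u}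
      = (fun ω => (B ω, Z ω)) ⁻¹' S := rfl
  have hmap : P.map (fun ω => (B ω, Z ω)) = (P.map B).prod (P.map Z) :=
    (ProbabilityTheory.indepFun_iff_map_prod_eq_prod_map_map hBm.aemeasurable
      hZm.aemeasurable).mp hindep.symm
  have hPB : IsProbabilityMeasure (P.map B) := Measure.isProbabilityMeasure_map hBm.aemeasurable
  rw [hpre, ← Measure.map_apply (hBm.prodMk hZm) hS, hmap, hZ, Measure.prod_apply hS]
  have hslice : ∀ b : ℝ, (Prod.mk b ⁻¹' S) = {z | 1 - |Phi (z + b) - Phi (-z)| ≤ u} := by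
    intro b; rfl
  simp_rw [hslice, key _ u hu0 hu1]
  simp
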